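/- Define sequences of positive integers by n_0 = 45, n_{m+1} = 2·(2^{m+5} − 1)·n_m, and k_0 = 7, k_{m+1} = 2·(2^{m+5} − 2(m+5) − 1)·(k_m − 1), for m ≥ 0. Then for every m ≥ 0, 20·k_m > n_m. -/

import Mathlib

/-- Block length of the level-`m` code `C_m`: `n_0 = 45`, `n_{m+1} = 2·(2^{m+5} − 1)·n_m`. -/
def towerBlockLength : ℕ → ℕ
  | 0 => 45
  | m + 1 => 2 * (2 ^ (m + 5) - 1) * towerBlockLength m

/-- Number of logical qubits of the level-`m` code `C_m`:
`k_0 = 7`, `k_{m+1} = 2·(2^{m+5} − 2(m+5) − 1)·(k_m − 1)`. -/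
def towerLogicalQubits : ℕ → ℕ
  | 0 => 7
  | m + 1 => 2 * (2 ^ (m + 5) - 2 * (m + 5) - 1) * (towerLogicalQubits m - 1)

lemma tower_pow_lb (m : ℕ) : 2 * m + 12 ≤ 2 ^ (m + 5) := by
  induction m with
  | zero => norm_num
  | succ m ih =>
    have h : 2 ^ (m + 1 + 5) = 2 * 2 ^ (m + 5) := by ring
    omega

lemma tower_k_lb : ∀ m, 7 ≤ towerLogicalQubits m := by
  intro m
  induction m with
  | zero => norm_num [towerLogicalQubits]
  | succ m ih =>
    have hp := tower_pow_lb m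
    have ha : 1 ≤ 2 ^ (m + 5) - 2 * (m + 5) - 1 := by omega
    have hk : 6 ≤ towerLogicalQubits m - 1 := by omega
    calc 7 ≤ 2 * 1 * 6 := by norm_num
    _ ≤ 2 * (2 ^ (m + 5) - 2 * (m + 5) - 1) * (towerLogicalQubits m - 1) := by
        exact Nat.mul_le_mul (Nat.mul_le_mul_left 2 ha) hk
    _ = towerLogicalQubits (m + 1) := rfl

lemma tower_n_lb : ∀ m, 3 ≤ m → 80 * 2 ^ (m + 4) ≤ towerBlockLength m := by
  intro m hm
  induction m, hm using Nat.le_induction with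
  | base => norm_num [towerBlockLength]
  | succ m hm ih =>
    have hp := tower_pow_lb m
    have hb : 1 ≤ 2 ^ (m + 5) - 1 := by omega
    have h2 : 2 ^ (m + 1 + 4) = 2 * 2 ^ (m + 4) := by ring
    calc 80 * 2 ^ (m + 1 + 4) = 2 * (80 * 2 ^ (m + 4)) := by rw [h2]; ring
    _ ≤ 2 * towerBlockLength m := by omega
    _ = 2 * 1 * towerBlockLength m := by ring
    _ ≤ 2 * (2 ^ (m + 5) - 1) * towerBlockLength m := by
        exact Nat.mul_le_mul_right _ (Nat.mul_le_mul_left 2 hb)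
    _ = towerBlockLength (m + 1) := rfl

lemma tower_poly_lb : ∀ m, 3 ≤ m → 12 * m ^ 2 + 135 * m + 375 ≤ (2 * m + 9) * 2 ^ (m + 4) := by
  intro m hm
  induction m, hm using Nat.le_induction with
  | base => norm_num
  | succ m hm ih =>
    have h2 : 2 ^ (m + 1 + 4) = 2 * 2 ^ (m + 4) := by ring
    have hstep : 12 * (m + 1) ^ 2 + 135 * (m + 1) + 375 ≤ 2 * (12 * m ^ 2 + 135 * m + 375) := by
      nlinarith
    have hmono : 2 * ((2 * m + 9) * 2 ^ (m + 4)) ≤ (2 * (m + 1) + 9) * 2 ^ (m + 1 + 4) := by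
      rw [h2]
      have : (0:ℕ) < 2 ^ (m + 4) := Nat.pow_pos (by norm_num)
      nlinarith
    omega

/-- Key arithmetic step inequality, with natural subtraction eliminated. -/
lemma tower_key (m P n k' a b : ℕ) (ha : a + (2 * m + 11) = 2 * P) (hb : b + 1 = 2 * P)
    (hpoly : 12 * m ^ 2 + 135 * m + 375 ≤ (2 * m + 9) * P) (hn : 80 * P ≤ n)
    (ih : n * (P + 3 * m + 18) ≤ 20 * (k' + 1) * P) :
    2 * b * n * (2 * P + 3 * (m + 1) + 18) ≤ 20 * (2 * a * k') * (2 * P) := by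
  zify at *
  have ha' : (a : ℤ) = 2 * P - 2 * m - 11 := by linarith
  have hb' : (b : ℤ) = 2 * P - 1 := by linarith
  rw [ha', hb']
  have ha0 : (0:ℤ) ≤ 2 * (P:ℤ) - 2 * m - 11 := by
    have : (0:ℤ) ≤ (a:ℤ) := by positivity
    linarith
  have h1 : (0:ℤ) ≤ 2 * (2 * (P:ℤ) - 2 * m - 11) := by linarith
  have t1 := mul_le_mul_of_nonneg_left ih h1
  have t2 := mul_le_mul_of_nonneg_left hpoly (by positivity : (0:ℤ) ≤ (n:ℤ))
  have t3 := mul_le_mul_of_nonneg_right hn (by positivity : (0:ℤ) ≤ (P:ℤ))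
  have t4 : (0:ℤ) ≤ (k':ℤ) * ((2 * (P:ℤ) - 2 * m - 11) * P) :=
    mul_nonneg (by positivity) (mul_nonneg ha0 (by positivity))
  have t5 : (0:ℤ) ≤ (m:ℤ) * P := by positivity
  have t6 : (0:ℤ) ≤ (P:ℤ) := by positivity
  nlinarith [t1, t2, t3, t4, t5, t6]

lemma tower_invariant : ∀ m, 3 ≤ m →
    towerBlockLength m * (2 ^ (m + 4) + 3 * m + 18) ≤ 20 * towerLogicalQubits m * 2 ^ (m + 4) := by
  intro m hm
  induction m, hm using Nat.le_induction with
  | base => norm_num [towerBlockLength, towerLogicalQubits]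
  | succ m hm ih =>
    have hp := tower_pow_lb m
    have hk := tower_k_lb m
    have hn := tower_n_lb m hm
    have hpoly := tower_poly_lb m hm
    set n := towerBlockLength m with hn_def
    set k := towerLogicalQubits m with hk_def
    have h5 : 2 ^ (m + 5) = 2 * 2 ^ (m + 4) := by ring
    set P := 2 ^ (m + 4) with hP_def
    -- introduce subtraction-free names
    set a := 2 ^ (m + 5) - 2 * (m + 5) - 1 with ha_def
    set b := 2 ^ (m + 5) - 1 with hb_def
    have ha : a + (2 * m + 11) = 2 * P := by omega
    have hb : b + 1 = 2 * P := by omega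
    set k' := k - 1 with hk'_def
    have hk1 : k = k' + 1 := by omega
    have hBL : towerBlockLength (m + 1) = 2 * b * n := rfl
    have hLQ : towerLogicalQubits (m + 1) = 2 * a * k' := rfl
    have ih' : n * (P + 3 * m + 18) ≤ 20 * (k' + 1) * P := by
      calc n * (P + 3 * m + 18) = n * (P + 3 * m + 18) := rfl
      _ ≤ 20 * k * P := ih
      _ = 20 * (k' + 1) * P := by rw [hk1]
    have h15 : 2 ^ (m + 1 + 4) = 2 * P := by rw [hP_def]; ring
    rw [hBL, hLQ, h15]
    exact tower_key m P n k' a b ha hb hpoly hn ih'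

/-- The coding rate `k_m/n_m` of every code in the tower exceeds `1/20`:
for every `m ≥ 0`, `20·k_m > n_m`. -/
theorem towerRate_gt_one_twentieth (m : ℕ) :
    20 * towerLogicalQubits m > towerBlockLength m := by
  match m, Nat.lt_or_ge m 3 with
  | 0, _ => norm_num [towerBlockLength, towerLogicalQubits]
  | 1, _ => norm_num [towerBlockLength, towerLogicalQubits]
  | 2, _ => norm_num [towerBlockLength, towerLogicalQubits]
  | (m + 3), _ =>
    have hm : 3 ≤ m + 3 := by omega
    have h := tower_invariant (m + 3) hm
    have hP : (0:ℕ) < 2 ^ (m + 3 + 4) := Nat.pow_pos (by norm_num)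
    have hn : 0 < towerBlockLength (m + 3) := by
      have := tower_n_lb (m + 3) hm
      omega
    nlinarith [h, hP, hn]
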